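/- arXiv:2502.08456 — 3 statements merged into one kernel-verified Lean document; each statement's English description precedes it below -/
import Mathlib

section
/- Olsen's Hölder inequality in Morrey spaces: let 1 ≤ p, q < ∞ with 1/p + 1/q ≥ 1, let 0 ≤ λ, μ ≤ n, and define r and ν by 1/r = 1/p + 1/q and ν/r = λ/p + μ/q. Then for all f ∈ L^{p,λ}(ℝⁿ) and g ∈ L^{q,μ}(ℝⁿ), the product fg belongs to L^{r,ν}(ℝⁿ) and ‖fg‖_{L^{r,ν}} ≤ ‖f‖_{L^{p,λ}} ‖g‖_{L^{q,μ}}. -/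
open MeasureTheory ENNReal

/-- Classical Morrey norm `sup_{x,r>0} r^{-λ/p} ‖f χ_{B(x,r)}‖_{L^p}`. -/
noncomputable def morreyNorm (n : ℕ) (p lam : ℝ) (f : (Fin n → ℝ) → ℝ) : ℝ≥0∞ :=
  ⨆ (x : Fin n → ℝ) (r : ℝ) (_ : 0 < r),
    ENNReal.ofReal (r ^ (-(lam / p))) *
      eLpNorm ((Metric.ball x r).indicator f) (ENNReal.ofReal p) volume

/-- Olsen's Hölder inequality in Morrey spaces. -/
theorem stmt_1 (n : ℕ) (p q r lam mu nu : ℝ)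
    (hp : 1 ≤ p) (hq : 1 ≤ q) (hpq : 1 ≤ 1 / p + 1 / q)
    (hlam : 0 ≤ lam) (hlamn : lam ≤ n) (hmu : 0 ≤ mu) (hmun : mu ≤ n)
    (hr : 1 / r = 1 / p + 1 / q) (hnu : nu / r = lam / p + mu / q)
    (f g : (Fin n → ℝ) → ℝ)
    (hf : AEStronglyMeasurable f volume) (hg : AEStronglyMeasurable g volume)
    (hfM : morreyNorm n p lam f < ∞) (hgM : morreyNorm n q mu g < ∞) :
    morreyNorm n r nu (fun x => f x * g x) < ∞ ∧
      morreyNorm n r nu (fun x => f x * g x) ≤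
        morreyNorm n p lam f * morreyNorm n q mu g := by
  have hp0 : 0 < p := lt_of_lt_of_le one_pos hp
  have hq0 : 0 < q := lt_of_lt_of_le one_pos hq
  have hsum : 0 < 1 / p + 1 / q := by positivity
  have hr0 : 0 < r := by
    have : 0 < 1 / r := hr ▸ hsum
    exact one_div_pos.mp this
  have hmain : morreyNorm n r nu (fun x => f x * g x) ≤
      morreyNorm n p lam f * morreyNorm n q mu g := by
    rw [morreyNorm]
    refine iSup_le fun x => iSup_le fun R => iSup_le fun hR => ?_
    -- exponent identity in ENNReal
    have hexp : 1 / ENNReal.ofReal r = 1 / ENNReal.ofReal p + 1 / ENNReal.ofReal q := by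
      rw [one_div, one_div, one_div, ← ENNReal.ofReal_inv_of_pos hr0,
        ← ENNReal.ofReal_inv_of_pos hp0, ← ENNReal.ofReal_inv_of_pos hq0,
        ← ENNReal.ofReal_add (by positivity) (by positivity)]
      congr 1
      simpa [one_div] using hr
    have hind : (Metric.ball x R).indicator (fun y => f y * g y) =
        fun y => ((Metric.ball x R).indicator f y) * ((Metric.ball x R).indicator g y) := by
      funext y
      by_cases hy : y ∈ Metric.ball x R <;> simp [Set.indicator, hy]
    have hHolder : eLpNorm ((Metric.ball x R).indicator (fun y => f y * g y))
        (ENNReal.ofReal r) volume ≤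
        eLpNorm ((Metric.ball x R).indicator f) (ENNReal.ofReal p) volume *
        eLpNorm ((Metric.ball x R).indicator g) (ENNReal.ofReal q) volume := by
      rw [hind]
      have : ENNReal.HolderTriple (ENNReal.ofReal p) (ENNReal.ofReal q) (ENNReal.ofReal r) :=
        ⟨by simpa [one_div] using hexp.symm⟩
      simpa using eLpNorm_le_eLpNorm_mul_eLpNorm'_of_norm
        (hf.indicator measurableSet_ball) (hg.indicator measurableSet_ball)
        (· * ·) 1 (Filter.Eventually.of_forall fun y => by simp [abs_mul])
    have hRsplit : ENNReal.ofReal (R ^ (-(nu / r))) =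
        ENNReal.ofReal (R ^ (-(lam / p))) * ENNReal.ofReal (R ^ (-(mu / q))) := by
      rw [← ENNReal.ofReal_mul (by positivity), ← Real.rpow_add hR]
      congr 2
      rw [hnu]; ring
    calc ENNReal.ofReal (R ^ (-(nu / r))) *
        eLpNorm ((Metric.ball x R).indicator (fun y => f y * g y)) (ENNReal.ofReal r) volume
        ≤ (ENNReal.ofReal (R ^ (-(lam / p))) * ENNReal.ofReal (R ^ (-(mu / q)))) *
          (eLpNorm ((Metric.ball x R).indicator f) (ENNReal.ofReal p) volume *
           eLpNorm ((Metric.ball x R).indicator g) (ENNReal.ofReal q) volume) := by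
          rw [← hRsplit]; exact mul_le_mul_right hHolder _
      _ = (ENNReal.ofReal (R ^ (-(lam / p))) *
            eLpNorm ((Metric.ball x R).indicator f) (ENNReal.ofReal p) volume) *
          (ENNReal.ofReal (R ^ (-(mu / q))) *
            eLpNorm ((Metric.ball x R).indicator g) (ENNReal.ofReal q) volume) := by ring
      _ ≤ morreyNorm n p lam f * morreyNorm n q mu g := by
          refine mul_le_mul' ?_ ?_
          · exact le_iSup_of_le x (le_iSup_of_le R (le_iSup_of_le hR le_rfl))
          · exact le_iSup_of_le x (le_iSup_of_le R (le_iSup_of_le hR le_rfl))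
  exact ⟨lt_of_le_of_lt hmain (ENNReal.mul_lt_top hfM hgM), hmain⟩
end

section
/- Lemma on intermediate terms (Lerner–Lorist–Ombrosi): let 1 ≤ r, t < ∞, m ∈ ℕ⁺, Q a cube in ℝⁿ, f, g bounded with compact support, b locally integrable. For 0 ≤ k ≤ m define c_k := ⟨|b − ⟨b⟩_Q|^{m−k} |f|⟩_{r,Q} · ⟨|b − ⟨b⟩_Q|^{k} |g|⟩_{t,Q}. Then c_k ≤ c₀ + c_m for every 0 ≤ k ≤ m. -/
open MeasureTheory ENNReal

/-- The (closed) cube in ℝⁿ with lower corner `a` and side length `ℓ`. -/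
def cube (n : ℕ) (a : Fin n → ℝ) (ℓ : ℝ) : Set (Fin n → ℝ) :=
  {y | ∀ i, a i ≤ y i ∧ y i ≤ a i + ℓ}

/-- Average `⟨b⟩_Q = |Q|⁻¹ ∫_Q b`. -/
noncomputable def cubeAvg (n : ℕ) (Q : Set (Fin n → ℝ)) (b : (Fin n → ℝ) → ℝ) : ℝ :=
  (∫ y in Q, b y) / (volume Q).toReal

/-- The `s`-average `⟨h⟩_{s,Q} = (|Q|⁻¹ ∫_Q |h|^s)^{1/s}`. -/
noncomputable def sAvg (n : ℕ) (s : ℝ) (Q : Set (Fin n → ℝ))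
    (h : (Fin n → ℝ) → ℝ) : ℝ≥0∞ :=
  ((volume Q)⁻¹ * ∫⁻ y in Q, ENNReal.ofReal |h y| ^ s) ^ (1 / s)

/-- `c_k = ⟨|b - ⟨b⟩_Q|^{m-k} |f|⟩_{r,Q} · ⟨|b - ⟨b⟩_Q|^{k} |g|⟩_{t,Q}`. -/
noncomputable def ck (n m : ℕ) (r t : ℝ) (Q : Set (Fin n → ℝ))
    (b f g : (Fin n → ℝ) → ℝ) (k : ℕ) : ℝ≥0∞ :=
  sAvg n r Q (fun y => |b y - cubeAvg n Q b| ^ (m - k) * |f y|) *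
    sAvg n t Q (fun y => |b y - cubeAvg n Q b| ^ k * |g y|)

/- ### Auxiliary lemmas -/

lemma geom_mean_le_add (x y : ℝ≥0∞) (θ : ℝ) (h0 : 0 ≤ θ) (h1 : θ ≤ 1) :
    x ^ θ * y ^ (1 - θ) ≤ x + y := by
  have h1' : (0:ℝ) ≤ 1 - θ := by linarith
  rcases le_total x y with h | h
  · calc x ^ θ * y ^ (1-θ) ≤ y ^ θ * y ^ (1-θ) :=
          mul_le_mul_left (ENNReal.rpow_le_rpow h h0) _
      _ = y ^ (θ + (1-θ)) := (ENNReal.rpow_add_of_nonneg _ _ h0 h1').symm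
      _ = y := by norm_num
      _ ≤ x + y := le_add_self
  · calc x ^ θ * y ^ (1-θ) ≤ x ^ θ * x ^ (1-θ) :=
          mul_le_mul_right (ENNReal.rpow_le_rpow h h1') _
      _ = x ^ (θ + (1-θ)) := (ENNReal.rpow_add_of_nonneg _ _ h0 h1').symm
      _ = x := by norm_num
      _ ≤ x + y := le_self_add

lemma lintegral_geom_mean {α : Type*} [MeasurableSpace α] (μ : Measure α)
    (u v : α → ℝ≥0∞) (hu : AEMeasurable u μ) (hv : AEMeasurable v μ)
    (θ : ℝ) (h0 : 0 < θ) (h1 : θ < 1) :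
    ∫⁻ x, u x ^ θ * v x ^ (1 - θ) ∂μ ≤ (∫⁻ x, u x ∂μ) ^ θ * (∫⁻ x, v x ∂μ) ^ (1 - θ) := by
  have h1' : (0:ℝ) < 1 - θ := by linarith
  have hpq : (1/θ).HolderConjugate (1/(1-θ)) := by
    simpa only [one_div] using Real.HolderConjugate.inv_one_sub_inv h0 h1
  have := ENNReal.lintegral_mul_le_Lp_mul_Lq μ hpq
    (f := fun x => u x ^ θ) (g := fun x => v x ^ (1-θ))
    (hu.pow_const θ) (hv.pow_const (1-θ))
  simpa [← ENNReal.rpow_natCast, ← ENNReal.rpow_mul, mul_inv_cancel₀ h0.ne',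
    mul_inv_cancel₀ h1'.ne', one_div_one_div] using this

lemma sAvg_eq_lintegral (n : ℕ) (s : ℝ) (hs : 0 ≤ s) (Q : Set (Fin n → ℝ)) (c : ℝ) (j : ℕ)
    (b f : (Fin n → ℝ) → ℝ) :
    sAvg n s Q (fun y => |b y - c| ^ j * |f y|)
      = ((volume Q)⁻¹ *
          ∫⁻ y in Q, ENNReal.ofReal |b y - c| ^ ((j : ℝ) * s) * ENNReal.ofReal |f y| ^ s)
        ^ (1 / s) := by
  unfold sAvg
  congr 2
  refine lintegral_congr fun y => ?_
  rw [abs_mul, abs_pow, abs_abs, abs_abs,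
    ENNReal.ofReal_mul (by positivity), ENNReal.ofReal_pow (abs_nonneg _),
    ENNReal.mul_rpow_of_nonneg _ _ hs, ← ENNReal.rpow_natCast, ← ENNReal.rpow_mul]

lemma holder_interp {α : Type*} [MeasurableSpace α] (μ : Measure α) (A H : α → ℝ≥0∞)
    (hA : AEMeasurable A μ) (hH : AEMeasurable H μ) (s e M : ℝ) (hs : 0 ≤ s)
    (he0 : 0 < e) (he1 : e < 1) :
    ∫⁻ y, A y ^ (M * s * e) * H y ^ s ∂μ ≤
      (∫⁻ y, A y ^ (M * s) * H y ^ s ∂μ) ^ e * (∫⁻ y, H y ^ s ∂μ) ^ (1 - e) := by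
  have key := lintegral_geom_mean μ (fun y => A y ^ (M*s) * H y ^ s) (fun y => H y ^ s)
    ((hA.pow_const _).mul (hH.pow_const _)) (hH.pow_const _) e he0 he1
  refine le_trans (le_of_eq (lintegral_congr fun y => ?_)) key
  have hs1 : s * e + s * (1 - e) = s := by ring
  rw [ENNReal.mul_rpow_of_nonneg _ _ he0.le, ← ENNReal.rpow_mul,
    ← ENNReal.rpow_mul, ← ENNReal.rpow_mul]
  conv_rhs => rw [mul_assoc,
    ← ENNReal.rpow_add_of_nonneg _ _ (mul_nonneg hs he0.le) (mul_nonneg hs (by linarith)), hs1]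

lemma mul_geom_split (V X Y : ℝ≥0∞) (θ : ℝ) (h0 : 0 ≤ θ) (h1 : θ ≤ 1) :
    V * (X ^ θ * Y ^ (1 - θ)) = (V * X) ^ θ * (V * Y) ^ (1 - θ) := by
  rw [ENNReal.mul_rpow_of_nonneg _ _ h0, ENNReal.mul_rpow_of_nonneg _ _ (by linarith),
    show V ^ θ * X ^ θ * (V ^ (1-θ) * Y ^ (1-θ)) = V ^ θ * V ^ (1-θ) * (X ^ θ * Y ^ (1-θ)) by ring,
    ← ENNReal.rpow_add_of_nonneg _ _ h0 (by linarith)]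
  norm_num

lemma rpow_split (X Y : ℝ≥0∞) (e1 e2 s : ℝ) (hs : 0 ≤ s) :
    (X ^ e1 * Y ^ e2) ^ s = (X ^ s) ^ e1 * (Y ^ s) ^ e2 := by
  rw [ENNReal.mul_rpow_of_nonneg _ _ hs, ← ENNReal.rpow_mul, ← ENNReal.rpow_mul,
    ← ENNReal.rpow_mul, ← ENNReal.rpow_mul, mul_comm e1 s, mul_comm e2 s]

lemma final_rearrange (P Q R S : ℝ≥0∞) (θ : ℝ) (h0 : 0 ≤ θ) (h1 : θ ≤ 1) :
    P ^ θ * Q ^ (1 - θ) * (R ^ (1 - θ) * S ^ θ) = (P * S) ^ θ * (Q * R) ^ (1 - θ) := by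
  rw [ENNReal.mul_rpow_of_nonneg _ _ h0, ENNReal.mul_rpow_of_nonneg _ _ (by linarith)]
  ring

/-- Lerner–Lorist–Ombrosi: `c_k ≤ c₀ + c_m` for `0 ≤ k ≤ m`. -/
theorem stmt_10 (n m : ℕ) (hm : 0 < m) (r t : ℝ) (hr : 1 ≤ r) (ht : 1 ≤ t)
    (a : Fin n → ℝ) (ℓ : ℝ) (hℓ : 0 < ℓ)
    (f g b : (Fin n → ℝ) → ℝ)
    (hfm : Measurable f) (hgm : Measurable g)
    (hfb : ∃ M, ∀ x, |f x| ≤ M) (hgb : ∃ M, ∀ x, |g x| ≤ M)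
    (hfs : HasCompactSupport f) (hgs : HasCompactSupport g)
    (hb : LocallyIntegrable b volume)
    (k : ℕ) (hk : k ≤ m) :
    ck n m r t (cube n a ℓ) b f g k ≤
      ck n m r t (cube n a ℓ) b f g 0 + ck n m r t (cube n a ℓ) b f g m := by
  rcases Nat.eq_zero_or_pos k with rfl | hk0
  · exact le_self_add
  rcases eq_or_lt_of_le hk with rfl | hkm
  · exact le_add_self
  have hr0 : (0:ℝ) < r := lt_of_lt_of_le one_pos hr
  have ht0 : (0:ℝ) < t := lt_of_lt_of_le one_pos ht
  set Q := cube n a ℓ with hQ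
  set c := cubeAvg n Q b with hc
  set μ := volume.restrict Q with hμ
  set A : (Fin n → ℝ) → ℝ≥0∞ := fun y => ENNReal.ofReal |b y - c| with hA
  set F : (Fin n → ℝ) → ℝ≥0∞ := fun y => ENNReal.ofReal |f y| with hF
  set G : (Fin n → ℝ) → ℝ≥0∞ := fun y => ENNReal.ofReal |g y| with hG
  have hAm : AEMeasurable A μ :=
    ENNReal.measurable_ofReal.comp_aemeasurable
      (continuous_abs.measurable.comp_aemeasurable
        (hb.aestronglyMeasurable.aemeasurable.restrict.sub aemeasurable_const))
  have hFm : AEMeasurable F μ := (hfm.abs.ennreal_ofReal).aemeasurable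
  have hGm : AEMeasurable G μ := (hgm.abs.ennreal_ofReal).aemeasurable
  set If : ℕ → ℝ≥0∞ := fun j => (volume Q)⁻¹ * ∫⁻ y, A y ^ ((j:ℝ)*r) * F y ^ r ∂μ with hIf
  set Ig : ℕ → ℝ≥0∞ := fun j => (volume Q)⁻¹ * ∫⁻ y, A y ^ ((j:ℝ)*t) * G y ^ t ∂μ with hIg
  have hck : ∀ j, ck n m r t Q b f g j = If (m - j) ^ (1/r) * Ig j ^ (1/t) := by
    intro j
    unfold ck
    rw [sAvg_eq_lintegral n r hr0.le Q c (m-j) b f, sAvg_eq_lintegral n t ht0.le Q c j b g]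
  have hm' : (0:ℝ) < m := by exact_mod_cast hm
  set θ : ℝ := ((m:ℝ) - k) / m with hθ
  have hθ0 : 0 < θ := by
    apply div_pos _ hm'
    have : (k:ℝ) < m := by exact_mod_cast hkm
    linarith
  have hθ1 : θ < 1 := by
    rw [hθ, div_lt_one hm']
    have : (0:ℝ) < k := by exact_mod_cast hk0
    linarith
  -- bound for the f-factor
  have hIfb : If (m - k) ≤ If m ^ θ * If 0 ^ (1 - θ) := by
    have he : ((m - k : ℕ) : ℝ) * r = (m:ℝ) * r * θ := by
      rw [Nat.cast_sub hk, hθ]; field_simp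
    have h0 : ((0:ℕ):ℝ) * r = (0:ℝ) * r := by norm_num
    calc If (m - k) = (volume Q)⁻¹ * ∫⁻ y, A y ^ ((m:ℝ) * r * θ) * F y ^ r ∂μ := by
          rw [hIf]; simp only [he]
      _ ≤ (volume Q)⁻¹ * ((∫⁻ y, A y ^ ((m:ℝ) * r) * F y ^ r ∂μ) ^ θ *
            (∫⁻ y, F y ^ r ∂μ) ^ (1 - θ)) :=
          mul_le_mul_right (holder_interp μ A F hAm hFm r θ (m:ℝ) hr0.le hθ0 hθ1) _
      _ = ((volume Q)⁻¹ * ∫⁻ y, A y ^ ((m:ℝ) * r) * F y ^ r ∂μ) ^ θ *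
            ((volume Q)⁻¹ * ∫⁻ y, F y ^ r ∂μ) ^ (1 - θ) :=
          mul_geom_split _ _ _ θ hθ0.le hθ1.le
      _ = If m ^ θ * If 0 ^ (1 - θ) := by
          rw [hIf]; simp [ENNReal.rpow_zero]
  -- bound for the g-factor
  have hIgb : Ig k ≤ Ig m ^ (1 - θ) * Ig 0 ^ θ := by
    have he : (k : ℝ) * t = (m:ℝ) * t * (1 - θ) := by
      rw [hθ]; field_simp; ring
    have h1θ0 : 0 < 1 - θ := by linarith
    have h1θ1 : 1 - θ < 1 := by linarith
    calc Ig k = (volume Q)⁻¹ * ∫⁻ y, A y ^ ((m:ℝ) * t * (1 - θ)) * G y ^ t ∂μ := by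
          rw [hIg]; simp only [he]
      _ ≤ (volume Q)⁻¹ * ((∫⁻ y, A y ^ ((m:ℝ) * t) * G y ^ t ∂μ) ^ (1 - θ) *
            (∫⁻ y, G y ^ t ∂μ) ^ (1 - (1 - θ))) :=
          mul_le_mul_right (holder_interp μ A G hAm hGm t (1 - θ) (m:ℝ) ht0.le h1θ0 h1θ1) _
      _ = ((volume Q)⁻¹ * ∫⁻ y, A y ^ ((m:ℝ) * t) * G y ^ t ∂μ) ^ (1 - θ) *
            ((volume Q)⁻¹ * ∫⁻ y, G y ^ t ∂μ) ^ (1 - (1 - θ)) :=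
          mul_geom_split _ _ _ (1 - θ) h1θ0.le h1θ1.le
      _ = Ig m ^ (1 - θ) * Ig 0 ^ θ := by
          rw [hIg]; simp [ENNReal.rpow_zero]
  -- combine
  have hsub0 : m - (0:ℕ) = m := rfl
  calc ck n m r t Q b f g k = If (m - k) ^ (1/r) * Ig k ^ (1/t) := hck k
    _ ≤ (If m ^ θ * If 0 ^ (1 - θ)) ^ (1/r) * (Ig m ^ (1 - θ) * Ig 0 ^ θ) ^ (1/t) :=
        mul_le_mul' (ENNReal.rpow_le_rpow hIfb (by positivity))
          (ENNReal.rpow_le_rpow hIgb (by positivity))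
    _ = (If m ^ (1/r)) ^ θ * (If 0 ^ (1/r)) ^ (1 - θ) *
          ((Ig m ^ (1/t)) ^ (1 - θ) * (Ig 0 ^ (1/t)) ^ θ) := by
        rw [rpow_split _ _ θ (1 - θ) (1/r) (by positivity),
          rpow_split _ _ (1 - θ) θ (1/t) (by positivity)]
    _ = (If m ^ (1/r) * Ig 0 ^ (1/t)) ^ θ * (If 0 ^ (1/r) * Ig m ^ (1/t)) ^ (1 - θ) :=
        final_rearrange _ _ _ _ θ hθ0.le hθ1.le
    _ = (ck n m r t Q b f g 0) ^ θ * (ck n m r t Q b f g m) ^ (1 - θ) := by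
        rw [hck 0, hck m]; simp
    _ ≤ ck n m r t Q b f g 0 + ck n m r t Q b f g m :=
        geom_mean_le_add _ _ θ hθ0.le hθ1.le
end

section
/- Rubio de Francia iteration algorithm properties: let Y be a Banach space of measurable functions on which the Hardy–Littlewood maximal operator M is bounded with operator norm ‖M‖_Y. For locally integrable h define ℛh := Σ_{k=0}^∞ M^k h / (2^k ‖M‖_Y^k), where M⁰h = |h|. Then (i) |h| ≤ ℛh pointwise; (ii) ‖ℛh‖_Y ≤ 2‖h‖_Y; (iii) M(ℛh) ≤ 2‖M‖_Y · ℛh pointwise, i.e. ℛh is an A₁ weight with [ℛh]_{A₁} ≤ 2‖M‖_Y. -/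
open MeasureTheory ENNReal

/-- Hardy–Littlewood maximal operator on ℝ≥0∞-valued functions,
`Mf(x) = sup_{Q ∋ x} |Q|⁻¹ ∫_Q f`. -/
noncomputable def maxOpE (n : ℕ) (f : (Fin n → ℝ) → ℝ≥0∞) (x : Fin n → ℝ) : ℝ≥0∞ :=
  ⨆ (a : Fin n → ℝ) (ℓ : ℝ) (_ : 0 < ℓ) (_ : x ∈ cube n a ℓ),
    (volume (cube n a ℓ))⁻¹ * ∫⁻ y in cube n a ℓ, f y

/-- The Rubio de Francia iteration `ℛh = Σ_k M^k h / (2^k K^k)`. -/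
noncomputable def rubioR (n : ℕ) (K : ℝ≥0∞) (h : (Fin n → ℝ) → ℝ≥0∞)
    (x : Fin n → ℝ) : ℝ≥0∞ :=
  ∑' k : ℕ, (maxOpE n)^[k] h x / (2 ^ k * K ^ k)

lemma cube_eq (n : ℕ) (a : Fin n → ℝ) (ℓ : ℝ) :
    cube n a ℓ = Set.pi Set.univ (fun i => Set.Icc (a i) (a i + ℓ)) := by
  ext y
  simp only [cube, Set.mem_setOf_eq, Set.mem_pi, Set.mem_univ, Set.mem_Icc, forall_true_left]

lemma measurableSet_cube (n : ℕ) (a : Fin n → ℝ) (ℓ : ℝ) : MeasurableSet (cube n a ℓ) := by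
  rw [cube_eq]; exact MeasurableSet.univ_pi fun i => measurableSet_Icc

lemma volume_cube (n : ℕ) (a : Fin n → ℝ) (ℓ : ℝ) :
    volume (cube n a ℓ) = ENNReal.ofReal ℓ ^ n := by
  rw [cube_eq, volume_pi_pi]
  simp [Real.volume_Icc]

lemma cube_subset {n : ℕ} {a a' : Fin n → ℝ} {ℓ ℓ' : ℝ} (ha : ∀ i, a' i ≤ a i)
    (hb : ∀ i, a i + ℓ ≤ a' i + ℓ') : cube n a ℓ ⊆ cube n a' ℓ' := by
  intro y hy i
  exact ⟨(ha i).trans (hy i).1, (hy i).2.trans (hb i)⟩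

lemma term_le_maxOpE (n : ℕ) (f : (Fin n → ℝ) → ℝ≥0∞) (x : Fin n → ℝ)
    (a : Fin n → ℝ) (ℓ : ℝ) (hℓ : 0 < ℓ) (hx : x ∈ cube n a ℓ) :
    (volume (cube n a ℓ))⁻¹ * ∫⁻ y in cube n a ℓ, f y ≤ maxOpE n f x := by
  unfold maxOpE
  exact le_iSup_of_le a (le_iSup_of_le ℓ (le_iSup_of_le hℓ (le_iSup_of_le hx le_rfl)))

lemma maxOpE_eq_ratSup (n : ℕ) (f : (Fin n → ℝ) → ℝ≥0∞) (x : Fin n → ℝ) :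
    maxOpE n f x = ⨆ (p : (Fin n → ℚ) × ℚ) (_ : 0 < (p.2 : ℝ))
      (_ : x ∈ cube n (fun i => (p.1 i : ℝ)) (p.2 : ℝ)),
      (volume (cube n (fun i => (p.1 i : ℝ)) (p.2 : ℝ)))⁻¹ *
        ∫⁻ y in cube n (fun i => (p.1 i : ℝ)) (p.2 : ℝ), f y := by
  apply le_antisymm
  · -- hard direction
    unfold maxOpE
    refine iSup_le fun a => iSup_le fun ℓ => iSup_le fun hℓ => iSup_le fun hx => ?_
    set S := ⨆ (p : (Fin n → ℚ) × ℚ) (_ : 0 < (p.2 : ℝ))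
      (_ : x ∈ cube n (fun i => (p.1 i : ℝ)) (p.2 : ℝ)),
      (volume (cube n (fun i => (p.1 i : ℝ)) (p.2 : ℝ)))⁻¹ *
        ∫⁻ y in cube n (fun i => (p.1 i : ℝ)) (p.2 : ℝ), f y with hS
    -- choose rational q_m ∈ (ℓ, ℓ + 1/(m+1))
    have hq : ∀ m : ℕ, ∃ q : ℚ, ℓ < q ∧ (q : ℝ) < ℓ + 1/(m+1) := by
      intro m
      have : (0:ℝ) < 1/((m:ℝ)+1) := by positivity
      exact exists_rat_btwn (by linarith)
    choose q hq1 hq2 using hq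
    -- the candidate values tend to the target
    have htend : Filter.Tendsto (fun m : ℕ => ((ENNReal.ofReal (q m))^n)⁻¹ *
        ∫⁻ y in cube n a ℓ, f y) Filter.atTop
        (nhds (((ENNReal.ofReal ℓ)^n)⁻¹ * ∫⁻ y in cube n a ℓ, f y)) := by
      have h1 : Filter.Tendsto (fun m : ℕ => ((q m : ℝ))) Filter.atTop (nhds ℓ) := by
        have hub : Filter.Tendsto (fun m : ℕ => ℓ + 1/((m:ℝ)+1)) Filter.atTop (nhds ℓ) := by
          simpa using tendsto_const_nhds.add (tendsto_one_div_add_atTop_nhds_zero_nat (𝕜 := ℝ))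
        exact tendsto_of_tendsto_of_tendsto_of_le_of_le tendsto_const_nhds hub
          (fun m => (hq1 m).le) (fun m => (hq2 m).le)
      have h2 : Filter.Tendsto (fun m : ℕ => ((ENNReal.ofReal (q m))^n)⁻¹) Filter.atTop
          (nhds (((ENNReal.ofReal ℓ)^n)⁻¹)) :=
        (continuous_inv.tendsto _).comp
          (((ENNReal.continuous_pow n).tendsto _).comp
            ((ENNReal.continuous_ofReal.tendsto _).comp h1))
      exact ENNReal.Tendsto.mul_const h2
        (Or.inl (by simp [pow_ne_top, ENNReal.inv_ne_zero, ofReal_ne_top]))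
    rw [volume_cube]
    refine le_of_tendsto' htend fun m => ?_
    -- pick rational lower corner a' close to a
    have ha : ∀ i : Fin n, ∃ r : ℚ, a i - ((q m : ℝ) - ℓ) < r ∧ (r : ℝ) < a i := by
      intro i
      exact exists_rat_btwn (by linarith [hq1 m])
    choose a' ha1 ha2 using ha
    have hsub : cube n a ℓ ⊆ cube n (fun i => (a' i : ℝ)) (q m : ℝ) := by
      refine cube_subset (fun i => (ha2 i).le) (fun i => ?_)
      have := ha1 i; linarith
    have hx' : x ∈ cube n (fun i => (a' i : ℝ)) (q m : ℝ) := hsub hx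
    have hq0 : 0 < ((q m : ℝ)) := lt_trans hℓ (hq1 m)
    calc ((ENNReal.ofReal (q m))^n)⁻¹ * ∫⁻ y in cube n a ℓ, f y
        ≤ (volume (cube n (fun i => (a' i : ℝ)) (q m : ℝ)))⁻¹ *
            ∫⁻ y in cube n (fun i => (a' i : ℝ)) (q m : ℝ), f y := by
          rw [volume_cube]
          exact mul_le_mul_right (lintegral_mono_set hsub) _
      _ ≤ S := by
          rw [hS]
          exact le_iSup_of_le (a', q m) (le_iSup_of_le hq0 (le_iSup_of_le hx' le_rfl))
  · refine iSup_le fun p => iSup_le fun hp => iSup_le fun hx => ?_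
    exact term_le_maxOpE n f x _ _ hp hx

lemma measurable_maxOpE (n : ℕ) (f : (Fin n → ℝ) → ℝ≥0∞) : Measurable (maxOpE n f) := by
  have : maxOpE n f = fun x => ⨆ (p : (Fin n → ℚ) × ℚ) (_ : 0 < (p.2 : ℝ))
      (_ : x ∈ cube n (fun i => (p.1 i : ℝ)) (p.2 : ℝ)),
      (volume (cube n (fun i => (p.1 i : ℝ)) (p.2 : ℝ)))⁻¹ *
        ∫⁻ y in cube n (fun i => (p.1 i : ℝ)) (p.2 : ℝ), f y := by
    funext x; exact maxOpE_eq_ratSup n f x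
  rw [this]
  refine Measurable.iSup fun p => ?_
  by_cases hp : 0 < (p.2 : ℝ)
  · simp only [iSup_pos hp]
    have : (fun x => ⨆ (_ : x ∈ cube n (fun i => (p.1 i : ℝ)) (p.2 : ℝ)),
        (volume (cube n (fun i => (p.1 i : ℝ)) (p.2 : ℝ)))⁻¹ *
          ∫⁻ y in cube n (fun i => (p.1 i : ℝ)) (p.2 : ℝ), f y)
        = (cube n (fun i => (p.1 i : ℝ)) (p.2 : ℝ)).indicator
          (fun _ => (volume (cube n (fun i => (p.1 i : ℝ)) (p.2 : ℝ)))⁻¹ *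
            ∫⁻ y in cube n (fun i => (p.1 i : ℝ)) (p.2 : ℝ), f y) := by
      funext x
      by_cases hx : x ∈ cube n (fun i => (p.1 i : ℝ)) (p.2 : ℝ)
      · rw [iSup_pos hx, Set.indicator_of_mem hx]
      · rw [iSup_neg hx, Set.indicator_of_notMem hx]
        exact ENNReal.bot_eq_zero
    rw [this]
    exact measurable_const.indicator (measurableSet_cube n _ _)
  · have h0 : (fun x => ⨆ (_ : 0 < (p.2 : ℝ))
        (_ : x ∈ cube n (fun i => (p.1 i : ℝ)) (p.2 : ℝ)),
        (volume (cube n (fun i => (p.1 i : ℝ)) (p.2 : ℝ)))⁻¹ *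
          ∫⁻ y in cube n (fun i => (p.1 i : ℝ)) (p.2 : ℝ), f y)
        = fun _ : Fin n → ℝ => (⊥ : ℝ≥0∞) := funext fun x => iSup_neg hp
    rw [h0]
    exact measurable_const

lemma maxOpE_const_mul (n : ℕ) (c : ℝ≥0∞) (hc : c ≠ ∞) (f : (Fin n → ℝ) → ℝ≥0∞)
    (x : Fin n → ℝ) : maxOpE n (fun y => c * f y) x = c * maxOpE n f x := by
  unfold maxOpE
  rw [ENNReal.mul_iSup]
  refine iSup_congr fun a => ?_
  rw [ENNReal.mul_iSup]
  refine iSup_congr fun ℓ => ?_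
  rw [ENNReal.mul_iSup]
  refine iSup_congr fun hℓ => ?_
  rw [ENNReal.mul_iSup]
  refine iSup_congr fun hx => ?_
  rw [lintegral_const_mul' c _ hc]
  ring

lemma maxOpE_add_le (n : ℕ) (f T : (Fin n → ℝ) → ℝ≥0∞) (hT : Measurable T)
    (x : Fin n → ℝ) :
    maxOpE n (fun y => f y + T y) x ≤ maxOpE n f x + maxOpE n T x := by
  unfold maxOpE
  refine iSup_le fun a => iSup_le fun ℓ => iSup_le fun hℓ => iSup_le fun hx => ?_
  rw [lintegral_add_right' f hT.aemeasurable, mul_add]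
  exact add_le_add (term_le_maxOpE n f x a ℓ hℓ hx) (term_le_maxOpE n T x a ℓ hℓ hx)

lemma maxOpE_tsum_le (n : ℕ) (g : ℕ → (Fin n → ℝ) → ℝ≥0∞)
    (hg : ∀ k, Measurable (g k)) (x : Fin n → ℝ) :
    maxOpE n (fun y => ∑' k, g k y) x ≤ ∑' k, maxOpE n (g k) x := by
  unfold maxOpE
  refine iSup_le fun a => iSup_le fun ℓ => iSup_le fun hℓ => iSup_le fun hx => ?_
  rw [lintegral_tsum fun k => (hg k).aemeasurable, ENNReal.tsum_mul_left.symm]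
  exact ENNReal.tsum_le_tsum fun k => term_le_maxOpE n (g k) x a ℓ hℓ hx

lemma aux_cancel (b c a : ℝ≥0∞) (hb0 : b ≠ 0) (hbt : b ≠ ∞) :
    b * (a / (b * c)) = a / c := by
  rw [div_eq_mul_inv, div_eq_mul_inv, ENNReal.mul_inv (Or.inl hb0) (Or.inl hbt)]
  calc b * (a * (b⁻¹ * c⁻¹)) = (b * b⁻¹) * (a * c⁻¹) := by ring
    _ = a * c⁻¹ := by rw [ENNReal.mul_inv_cancel hb0 hbt, one_mul]


/-- properties of the Rubio de Francia algorithm: (i) `h ≤ ℛh`;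
(ii) `‖ℛh‖_Y ≤ 2‖h‖_Y`; (iii) `M(ℛh) ≤ 2K·ℛh`, i.e. `[ℛh]_{A₁} ≤ 2‖M‖_Y`. -/
theorem stmt_13 (n : ℕ) (N : ((Fin n → ℝ) → ℝ≥0∞) → ℝ≥0∞) (K : ℝ≥0∞)
    (hK0 : 0 < K) (hKtop : K ≠ ∞)
    (hNsub : ∀ g : ℕ → (Fin n → ℝ) → ℝ≥0∞,
      N (fun x => ∑' k, g k x) ≤ ∑' k, N (g k))
    (hNsmul : ∀ (c : ℝ≥0∞) (f : (Fin n → ℝ) → ℝ≥0∞),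
      N (fun x => c * f x) = c * N f)
    (hM : ∀ f, N (maxOpE n f) ≤ K * N f)
    (h : (Fin n → ℝ) → ℝ≥0∞) :
    (∀ x, h x ≤ rubioR n K h x) ∧
      N (rubioR n K h) ≤ 2 * N h ∧
      ∀ x, maxOpE n (rubioR n K h) x ≤ 2 * K * rubioR n K h x := by
  set c : ℕ → ℝ≥0∞ := fun k => 2 ^ k * K ^ k with hc
  have h2K0 : (2 : ℝ≥0∞) * K ≠ 0 := mul_ne_zero (by norm_num) hK0.ne'
  have h2Kt : (2 : ℝ≥0∞) * K ≠ ∞ := ENNReal.mul_ne_top (by norm_num) hKtop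
  have hc0 : ∀ k, c k ≠ 0 := fun k =>
    mul_ne_zero (pow_ne_zero _ (by norm_num)) (pow_ne_zero _ hK0.ne')
  have hct : ∀ k, c k ≠ ∞ := fun k =>
    ENNReal.mul_ne_top (pow_ne_top (by norm_num)) (pow_ne_top hKtop)
  have hcs : ∀ k, c (k + 1) = (2 * K) * c k := by
    intro k; simp only [hc, pow_succ]; ring
  have hc00 : c 0 = 1 := by simp [hc]
  have hrub : ∀ x, rubioR n K h x = ∑' k, (maxOpE n)^[k] h x / c k := fun x => rfl
  -- measurability of iterates (k ≥ 1)
  have hmeas : ∀ k : ℕ, Measurable ((maxOpE n)^[k + 1] h) := by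
    intro k
    rw [Function.iterate_succ_apply']
    exact measurable_maxOpE n _
  refine ⟨?_, ?_, ?_⟩
  · -- (i)
    intro x
    have h0 : h x = (maxOpE n)^[0] h x / c 0 := by simp [hc00]
    rw [hrub, h0]
    exact ENNReal.le_tsum 0
  · -- (ii)
    have hiter : ∀ k, N ((maxOpE n)^[k] h) ≤ K ^ k * N h := by
      intro k
      induction k with
      | zero => simp
      | succ k ih =>
        rw [Function.iterate_succ_apply']
        calc N (maxOpE n ((maxOpE n)^[k] h)) ≤ K * N ((maxOpE n)^[k] h) := hM _
          _ ≤ K * (K ^ k * N h) := mul_le_mul_right ih K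
          _ = K ^ (k + 1) * N h := by rw [pow_succ]; ring
    calc N (rubioR n K h)
        ≤ ∑' k, N (fun x => (maxOpE n)^[k] h x / c k) :=
          hNsub fun k x => (maxOpE n)^[k] h x / c k
      _ ≤ ∑' k, ((2 : ℝ≥0∞)⁻¹) ^ k * N h := by
          refine ENNReal.tsum_le_tsum fun k => ?_
          have he : (fun x => (maxOpE n)^[k] h x / c k)
              = fun x => (c k)⁻¹ * (maxOpE n)^[k] h x := by
            funext x; rw [div_eq_mul_inv, mul_comm]
          rw [he, hNsmul]
          calc (c k)⁻¹ * N ((maxOpE n)^[k] h) ≤ (c k)⁻¹ * (K ^ k * N h) :=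
                mul_le_mul_right (hiter k) _
            _ = ((2 : ℝ≥0∞) ^ k)⁻¹ * ((K ^ k)⁻¹ * K ^ k) * N h := by
                rw [hc, ENNReal.mul_inv (Or.inl (pow_ne_zero _ (by norm_num)))
                  (Or.inl (pow_ne_top (by norm_num)))]
                ring
            _ = ((2 : ℝ≥0∞)⁻¹) ^ k * N h := by
                rw [ENNReal.inv_mul_cancel (pow_ne_zero _ hK0.ne') (pow_ne_top hKtop),
                  mul_one, ENNReal.inv_pow]
      _ = 2 * N h := by
          rw [ENNReal.tsum_mul_right, ENNReal.tsum_geometric, ENNReal.one_sub_inv_two, inv_inv]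
  · -- (iii)
    intro x
    set T : (Fin n → ℝ) → ℝ≥0∞ := fun y => ∑' k, (maxOpE n)^[k + 1] h y / c (k + 1) with hT
    have hTmeas : Measurable T :=
      Measurable.ennreal_tsum fun k => (hmeas k).div measurable_const
    have hsplit : ∀ y, rubioR n K h y = h y + T y := by
      intro y
      rw [hrub, tsum_eq_zero_add' ENNReal.summable]
      simp [hc00, hT]
    have hgmeas : ∀ k, Measurable fun y => (maxOpE n)^[k + 1] h y / c (k + 1) :=
      fun k => (hmeas k).div measurable_const
    have step1 : maxOpE n (rubioR n K h) x ≤ maxOpE n h x + maxOpE n T x := by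
      have : rubioR n K h = fun y => h y + T y := funext hsplit
      rw [this]
      exact maxOpE_add_le n h T hTmeas x
    have step2 : maxOpE n T x ≤ ∑' k, maxOpE n ((maxOpE n)^[k + 1] h) x / c (k + 1) := by
      refine le_trans (maxOpE_tsum_le n _ hgmeas x) ?_
      refine ENNReal.tsum_le_tsum fun k => ?_
      have he : (fun y => (maxOpE n)^[k + 1] h y / c (k + 1))
          = fun y => (c (k + 1))⁻¹ * (maxOpE n)^[k + 1] h y := by
        funext y; rw [div_eq_mul_inv, mul_comm]
      rw [he, maxOpE_const_mul n _ (ENNReal.inv_ne_top.2 (hc0 _)) _ x,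
        div_eq_mul_inv, mul_comm]
    -- combine: RHS = ∑' k, M^[k+1] h x / c k
    have key : maxOpE n (rubioR n K h) x ≤ ∑' k, (maxOpE n)^[k + 1] h x / c k := by
      rw [tsum_eq_zero_add' ENNReal.summable]
      refine le_trans step1 (add_le_add ?_ ?_)
      · simp only [zero_add, Function.iterate_one, hc00]
        rw [div_one]
      · refine le_trans step2 (le_of_eq ?_)
        refine tsum_congr fun k => ?_
        rw [show (maxOpE n)^[k + 1 + 1] h = maxOpE n ((maxOpE n)^[k + 1] h) from
          Function.iterate_succ_apply' _ _ _]
    calc maxOpE n (rubioR n K h) x ≤ ∑' k, (maxOpE n)^[k + 1] h x / c k := key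
      _ = ∑' k, (2 * K) * ((maxOpE n)^[k + 1] h x / c (k + 1)) := by
          refine tsum_congr fun k => ?_
          rw [hcs k, aux_cancel _ _ _ h2K0 h2Kt]
      _ = (2 * K) * ∑' k, (maxOpE n)^[k + 1] h x / c (k + 1) := ENNReal.tsum_mul_left
      _ ≤ (2 * K) * rubioR n K h x := by
          refine mul_le_mul_right ?_ _
          set F : ℕ → ℝ≥0∞ := fun k => (maxOpE n)^[k] h x / c k with hF
          calc ∑' k, (maxOpE n)^[k + 1] h x / c (k + 1) = ∑' k, F (k + 1) := rfl
            _ ≤ F 0 + ∑' k, F (k + 1) := le_add_self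
            _ = ∑' k, F k := (tsum_eq_zero_add' ENNReal.summable).symm
            _ = rubioR n K h x := (hrub x).symm
end
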